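/- Let I be a finite index set, d ≥ 1 an integer, and for each p ∈ I let λ_p and μ_p be partitions and r_p ∈ ℤ. Let K be an integer with K ≥ L(λ_p) and K ≥ L(μ_p) for all p ∈ I. Then in ℤ[x, x^{−1}]: Σ_{p∈I} Σ_{i=1}^{K} x^{d·β^{r_p}(λ_p)_i} = Σ_{p∈I} Σ_{i=1}^{K} x^{d·β^{r_p}(μ_p)_i} holds if and only if Σ_{p∈I} x^{d·r_p}·Res_{λ_p}(x^d) = Σ_{p∈I} x^{d·r_p}·Res_{μ_p}(x^d), where Res_ν(x^d) denotes the image of Res_ν(x) under the substitution x ↦ x^d. -/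

import Mathlib

/-- A partition: a weakly decreasing, eventually-zero sequence of naturals.
`part i` is the `(i+1)`-st part `λ_{i+1}`. -/
structure PartitionSeq where
  part : ℕ → ℕ
  antitone : Antitone part
  eventually_zero : ∃ N, ∀ i ≥ N, part i = 0

/-- The length `L(λ)`: the number of nonzero parts. -/
noncomputable def PartitionSeq.length (lam : PartitionSeq) : ℕ :=
  Set.ncard {i : ℕ | lam.part i ≠ 0}

/-- The size `|λ|`: the sum of the parts. -/
noncomputable def PartitionSeq.size (lam : PartitionSeq) : ℕ :=
  ∑ i ∈ Finset.range lam.length, lam.part i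

/-- `beta lam r i` is the `(i+1)`-st entry `β^r(λ)_{i+1} = λ_{i+1} + r - i` of the
`r`-shifted β-number (0-indexed version of `β^r(λ)_i = λ_i + r + 1 - i`). -/
def PartitionSeq.beta (lam : PartitionSeq) (r : ℤ) (i : ℕ) : ℤ :=
  (lam.part i : ℤ) + r - (i : ℤ)

/-- The residue `Res_λ(x) = Σ_{(a,b) ∈ Y(λ)} x^{cont(a,b)}` as a Laurent polynomial. -/
noncomputable def PartitionSeq.residue (lam : PartitionSeq) : LaurentPolynomial ℤ :=
  ∑ a ∈ Finset.range lam.length, ∑ b ∈ Finset.range (lam.part a),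
    LaurentPolynomial.T ((b : ℤ) - (a : ℤ))

/-- The residue with `x ↦ x^d` substituted: `Res_λ(x^d)`. -/
noncomputable def PartitionSeq.residuePow (lam : PartitionSeq) (d : ℕ) : LaurentPolynomial ℤ :=
  ∑ a ∈ Finset.range lam.length, ∑ b ∈ Finset.range (lam.part a),
    LaurentPolynomial.T ((d : ℤ) * ((b : ℤ) - (a : ℤ)))

/-- A strictly decreasing integer sequence `C` stabilises with respect to `r` if
`C_i = r + 1 - i` for all large `i` (0-indexed: `C i = r - i`). -/
def Stabilises (C : ℕ → ℤ) (r : ℤ) : Prop :=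
  ∃ K : ℕ, ∀ i ≥ K, C i = r - (i : ℤ)

/-- The partial sum `m_p(c) = c_0 + ⋯ + c_p`. -/
def psum {l : ℕ} (c : Fin l → ℕ) (p : Fin l) : ℕ := ∑ j ∈ Finset.Iic p, c j

/-- The multiplicity at `z ∈ ℤ` of the multiset `C_{[t]}`, for `0 ≤ t ≤ d`,
where `I_t = {p : m_p(c) = t}`; for `t = 0` or `t = d` this is the common multiset
`C_{[0]} = C_{[d]}` built from `I_0` (with entries shifted by `-1`) and `I_d`. -/
noncomputable def multAt {l : ℕ} (d : ℕ) (c : Fin l → ℕ) (C : Fin l → ℕ → ℤ)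
    (t : ℕ) (z : ℤ) : ℕ :=
  if t = 0 ∨ t = d then
    Nat.card {pi : Fin l × ℕ // psum c pi.1 = 0 ∧ C pi.1 pi.2 - 1 = z} +
    Nat.card {pi : Fin l × ℕ // psum c pi.1 = d ∧ C pi.1 pi.2 = z}
  else
    Nat.card {pi : Fin l × ℕ // psum c pi.1 = t ∧ C pi.1 pi.2 = z}

/-- The set `χ(C) = {l(C^q_i − 1) + q + 1 : 0 ≤ q ≤ l−1, i ≥ 1} ⊆ ℤ`. -/
def chiSet (l : ℕ) (C : Fin l → ℕ → ℤ) : Set ℤ :=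
  {z : ℤ | ∃ (q : Fin l) (i : ℕ), z = (l : ℤ) * (C q i - 1) + (q : ℤ) + 1}

/-- `Ct` is an admissible tuple for `C` (with respect to the data `d`, `c`):
(i) each `Ct p` is strictly decreasing; (ii) the multisets `Ct_{[t]}` and `C_{[t]}`
agree for all `0 ≤ t ≤ d`; (iii) for `0 ≠ p ∈ J = {j : c_j = 0}`, every term of `Ct p`
is a term of `Ct (p-1)`; (iv) if `0 ∈ J`, then for every term `z` of `Ct 0`,
`z - 1` is a term of `Ct (l-1)`. -/
def IsAdmissible {l : ℕ} (d : ℕ) (c : Fin l → ℕ) (C Ct : Fin l → ℕ → ℤ) : Prop :=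
  (∀ p : Fin l, StrictAnti (Ct p)) ∧
  (∀ t ≤ d, ∀ z : ℤ, multAt d c Ct t z = multAt d c C t z) ∧
  (∀ p : Fin l, c p = 0 → (p : ℕ) ≠ 0 →
    ∀ i : ℕ, ∃ i' : ℕ,
      Ct ⟨(p : ℕ) - 1, lt_of_le_of_lt (Nat.sub_le _ _) p.isLt⟩ i' = Ct p i) ∧
  (∀ h0 : 0 < l, c ⟨0, h0⟩ = 0 →
    ∀ i : ℕ, ∃ i' : ℕ, Ct ⟨l - 1, Nat.sub_lt h0 Nat.one_pos⟩ i' = Ct ⟨0, h0⟩ i - 1)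

/-- The Young diagram of a partition, with 0-indexed nodes:
`(a,b)` is a node iff `b < λ_{a+1}`. -/
def YoungSet (lam : PartitionSeq) : Set (ℕ × ℕ) :=
  {ab : ℕ × ℕ | ab.2 < lam.part ab.1}

/-- `S` is the Young diagram of the partition `mu`. -/
def IsDiagramOf (S : Set (ℕ × ℕ)) (mu : PartitionSeq) : Prop :=
  S = YoungSet mu

/-- The node `ab` of `Y(λ)` is removable: deleting it leaves the Young diagram
of some partition. -/
def IsRemovableNode (lam : PartitionSeq) (ab : ℕ × ℕ) : Prop :=
  ab ∈ YoungSet lam ∧ ∃ mu : PartitionSeq, IsDiagramOf (YoungSet lam \ {ab}) mu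

/-- The node `ab` of `Y(λ)` is `j`-removable (mod `l`): it is removable and its
content is congruent to `j` mod `l`. -/
def IsJRemovable (l j : ℕ) (lam : PartitionSeq) (ab : ℕ × ℕ) : Prop :=
  IsRemovableNode lam ab ∧ ((ab.2 : ℤ) - (ab.1 : ℤ)) ≡ (j : ℤ) [ZMOD (l : ℤ)]

/-- The node `ab` is `J`-removable for a set `J` of residues: `j`-removable
for some `j ∈ J`. -/
def IsSetRemovable (l : ℕ) (J : Set ℕ) (lam : PartitionSeq) (ab : ℕ × ℕ) : Prop :=
  ∃ j ∈ J, IsJRemovable l j lam ab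

/-- `mu` is obtained from `lam` by deleting a single `J`-removable node. -/
def RemoveStep (l : ℕ) (J : Set ℕ) (lam mu : PartitionSeq) : Prop :=
  ∃ ab : ℕ × ℕ, IsSetRemovable l J lam ab ∧ IsDiagramOf (YoungSet lam \ {ab}) mu

/-- The partial sum `m_p(θ) = θ_0 + ⋯ + θ_p` of a rational vector. -/
def psumQ {l : ℕ} (θ : Fin l → ℚ) (p : Fin l) : ℚ := ∑ j ∈ Finset.Iic p, θ j

/-- The map `s_i : ℚ^l → ℚ^l` (for `1 ≤ i ≤ l-1`). -/
def sAct {l : ℕ} (i : Fin l) (θ : Fin l → ℚ) : Fin l → ℚ := fun p =>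
  if (p : ℕ) = (i : ℕ) - 1 then θ p + θ i
  else if p = i then -θ i
  else if (p : ℕ) = (i : ℕ) + 1 then θ i + θ p
  else θ p

open LaurentPolynomial in
lemma PartitionSeq.part_eq_zero (lam : PartitionSeq) {i : ℕ} (hi : lam.length ≤ i) :
    lam.part i = 0 := by
  by_contra h
  obtain ⟨N, hN⟩ := lam.eventually_zero
  have hfin : {j : ℕ | lam.part j ≠ 0}.Finite := by
    apply (Set.finite_Iio N).subset
    intro j hj
    simp only [Set.mem_Iio]
    by_contra hjN
    exact hj (hN j (le_of_not_gt hjN))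
  have hsub : Set.Iic i ⊆ {j : ℕ | lam.part j ≠ 0} := by
    intro j hj
    simp only [Set.mem_setOf_eq]
    intro hz
    exact h (Nat.le_antisymm (hz ▸ lam.antitone hj) (Nat.zero_le _))
  have := Set.ncard_le_ncard hsub hfin
  have hIic : (Set.Iic i).ncard = i + 1 := by
    rw [← Finset.coe_Iic, Set.ncard_coe_finset, Nat.card_Iic]
  have hlen : lam.length = {j : ℕ | lam.part j ≠ 0}.ncard := rfl
  omega

open LaurentPolynomial in
lemma key_identity (lam : PartitionSeq) (r : ℤ) (d K : ℕ) (hK : lam.length ≤ K) :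
    (∑ i ∈ Finset.range K, (T ((d : ℤ) * lam.beta r i) : LaurentPolynomial ℤ)) -
      (∑ i ∈ Finset.range K, T ((d : ℤ) * (r - (i : ℤ)))) =
    (T (d : ℤ) - 1) * (T ((d : ℤ) * r) * lam.residuePow d) := by
  rw [← Finset.sum_sub_distrib]
  have step : ∀ i : ℕ,
      (T ((d : ℤ) * lam.beta r i) : LaurentPolynomial ℤ) - T ((d : ℤ) * (r - (i : ℤ)))
      = (T (d : ℤ) - 1) * ∑ b ∈ Finset.range (lam.part i),
          T ((d : ℤ) * ((b : ℤ) + (r - (i : ℤ)))) := by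
    intro i
    have tele := Finset.sum_range_sub
      (f := fun b : ℕ => (T ((d : ℤ) * ((b : ℤ) + (r - (i : ℤ)))) : LaurentPolynomial ℤ))
      (lam.part i)
    have : ∀ b : ℕ,
        (T ((d : ℤ) * (((b : ℕ) + 1 : ℕ) + (r - (i : ℤ)))) : LaurentPolynomial ℤ)
          - T ((d : ℤ) * ((b : ℤ) + (r - (i : ℤ))))
        = (T (d : ℤ) - 1) * T ((d : ℤ) * ((b : ℤ) + (r - (i : ℤ)))) := by
      intro b
      rw [sub_mul, one_mul, ← T_add]
      congr 2
      push_cast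
      ring
    rw [Finset.sum_congr rfl (fun b _ => this b), ← Finset.mul_sum] at tele
    have e1 : (d : ℤ) * lam.beta r i = (d : ℤ) * ((lam.part i : ℤ) + (r - (i : ℤ))) := by
      rw [PartitionSeq.beta]; ring
    have e2 : (d : ℤ) * (r - (i : ℤ)) = (d : ℤ) * (((0 : ℕ) : ℤ) + (r - (i : ℤ))) := by
      norm_num
    rw [e1, e2]
    exact tele.symm
  rw [Finset.sum_congr rfl (fun i _ => step i), ← Finset.mul_sum]
  congr 1
  rw [PartitionSeq.residuePow, Finset.mul_sum]
  rw [← Finset.sum_subset (Finset.range_subset_range.mpr hK)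
    (fun i _ hi => by
      rw [lam.part_eq_zero (le_of_not_gt (fun h => hi (Finset.mem_range.mpr h)))]
      simp)]
  refine Finset.sum_congr rfl fun a _ => ?_
  rw [Finset.mul_sum]
  refine Finset.sum_congr rfl fun b _ => ?_
  rw [← T_add]
  congr 1
  ring

open LaurentPolynomial in
lemma T_sub_one_ne_zero (d : ℕ) (hd : 1 ≤ d) :
    (T (d : ℤ) - 1 : LaurentPolynomial ℤ) ≠ 0 := by
  intro h
  have h0 : ((T (d : ℤ) - 1 : LaurentPolynomial ℤ)).coeff 0 = -1 := by
    rw [AddMonoidAlgebra.coeff_sub, Finsupp.sub_apply, T_apply, if_neg (by omega)]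
    have h1 : (1 : LaurentPolynomial ℤ).coeff 0 = 1 := by
      rw [← T_zero, T_apply, if_pos rfl]
    rw [h1]; ring
  rw [h] at h0
  simp at h0

/-- for a finite index set `I`, partitions `λ_p, μ_p`, shifts `r_p` and
`K ≥ L(λ_p), L(μ_p)` for all `p`:
`Σ_{p∈I} Σ_{i=1}^{K} x^{d·β^{r_p}(λ_p)_i} = Σ_{p∈I} Σ_{i=1}^{K} x^{d·β^{r_p}(μ_p)_i}`
iff `Σ_{p∈I} x^{d·r_p}·Res_{λ_p}(x^d) = Σ_{p∈I} x^{d·r_p}·Res_{μ_p}(x^d)`. -/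
theorem statement15 (ι : Type) [Fintype ι] (d : ℕ) (hd : 1 ≤ d)
    (lam mu : ι → PartitionSeq) (r : ι → ℤ) (K : ℕ)
    (hKl : ∀ p, (lam p).length ≤ K) (hKm : ∀ p, (mu p).length ≤ K) :
    ((∑ p : ι, ∑ i ∈ Finset.range K,
        (LaurentPolynomial.T ((d : ℤ) * (lam p).beta (r p) i) : LaurentPolynomial ℤ)) =
      ∑ p : ι, ∑ i ∈ Finset.range K,
        LaurentPolynomial.T ((d : ℤ) * (mu p).beta (r p) i)) ↔
    ((∑ p : ι, LaurentPolynomial.T ((d : ℤ) * r p) * (lam p).residuePow d) =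
      ∑ p : ι, LaurentPolynomial.T ((d : ℤ) * r p) * (mu p).residuePow d) := by
  open LaurentPolynomial in
  constructor
  · intro h
    apply mul_left_cancel₀ (T_sub_one_ne_zero d hd)
    rw [Finset.mul_sum, Finset.mul_sum]
    rw [← Finset.sum_congr rfl (fun p _ => key_identity (lam p) (r p) d K (hKl p)),
      ← Finset.sum_congr rfl (fun p _ => key_identity (mu p) (r p) d K (hKm p))]
    rw [Finset.sum_sub_distrib, Finset.sum_sub_distrib, h]
  · intro h
    have h2 := congrArg (fun z => (T (d : ℤ) - 1 : LaurentPolynomial ℤ) * z) h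
    simp only [Finset.mul_sum] at h2
    rw [← Finset.sum_congr rfl (fun p _ => key_identity (lam p) (r p) d K (hKl p)),
      ← Finset.sum_congr rfl (fun p _ => key_identity (mu p) (r p) d K (hKm p))] at h2
    rw [Finset.sum_sub_distrib, Finset.sum_sub_distrib] at h2
    exact sub_left_injective h2
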